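/- For the N-qubit one-axis twisted state |ψ⟩ = exp(-iθ J_x²/2)|1⟩^{⊗N} (N ≥ 2), one has ⟨σ_{1+}σ_{2-}⟩ = (1 - cos^{N-2}θ)/8, where σ_± = (σ_x ± iσ_y)/2. -/

import Mathlib

open Matrix Complex Finset

noncomputable section OneAxisTwisting

/-- Pauli x matrix in the basis `{|0⟩, |1⟩}`. -/
def pauliX : Matrix (Fin 2) (Fin 2) ℂ := !![0, 1; 1, 0]

/-- Pauli z matrix in the basis `{|0⟩, |1⟩}`. -/
def pauliZ : Matrix (Fin 2) (Fin 2) ℂ := !![1, 0; 0, -1]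

/-- The single-qubit operator `m` acting on site `k` of `N` qubits (identity elsewhere),
as a matrix on the computational basis indexed by `Fin N → Fin 2`. -/
def siteOp (N : ℕ) (k : Fin N) (m : Matrix (Fin 2) (Fin 2) ℂ) :
    Matrix (Fin N → Fin 2) (Fin N → Fin 2) ℂ :=
  Matrix.of fun s t =>
    m (s k) (t k) * ∏ j ∈ Finset.univ.erase k, (if s j = t j then (1 : ℂ) else 0)

/-- The collective spin operator `J_x = (1/2) Σ_k σ_{k,x}`. -/
def Jx (N : ℕ) : Matrix (Fin N → Fin 2) (Fin N → Fin 2) ℂ :=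
  (1 / 2 : ℂ) • ∑ k : Fin N, siteOp N k pauliX

/-- The all-down state `|1⟩^{⊗N}` as a vector. -/
def allDown (N : ℕ) : (Fin N → Fin 2) → ℂ :=
  fun s => if s = (fun _ => 1) then 1 else 0

/-- The one-axis twisted state `exp(-iθ J_x²/2) |1⟩^{⊗N}`. -/
def oneAxisTwisted (N : ℕ) (θ : ℝ) : (Fin N → Fin 2) → ℂ :=
  (NormedSpace.exp ((-(θ / 2 : ℂ) * Complex.I) • (Jx N * Jx N))).mulVec (allDown N)

/-- Expectation value `⟨ψ|O|ψ⟩` in the one-axis twisted state. -/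
def expVal (N : ℕ) (θ : ℝ) (O : Matrix (Fin N → Fin 2) (Fin N → Fin 2) ℂ) : ℂ :=
  star (oneAxisTwisted N θ) ⬝ᵥ O.mulVec (oneAxisTwisted N θ)


/-- Raising operator `σ₊ = (σ_x + iσ_y)/2 = |0⟩⟨1|`. -/
def pauliPlus : Matrix (Fin 2) (Fin 2) ℂ := !![0, 1; 0, 0]

/-- Lowering operator `σ₋ = (σ_x - iσ_y)/2 = |1⟩⟨0|`. -/
def pauliMinus : Matrix (Fin 2) (Fin 2) ℂ := !![0, 0; 1, 0]

namespace OAT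

/-- single-qubit Hadamard -/
def h : Matrix (Fin 2) (Fin 2) ℂ := ((Real.sqrt 2 : ℂ))⁻¹ • !![1, 1; 1, -1]

def kron (N : ℕ) (m : Fin N → Matrix (Fin 2) (Fin 2) ℂ) :
    Matrix (Fin N → Fin 2) (Fin N → Fin 2) ℂ :=
  Matrix.of fun s t => ∏ k, m k (s k) (t k)

lemma kron_mul (N : ℕ) (m m' : Fin N → Matrix (Fin 2) (Fin 2) ℂ) :
    kron N m * kron N m' = kron N (fun k => m k * m' k) := by
  ext s t
  simp only [kron, Matrix.mul_apply, Matrix.of_apply]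
  simp_rw [← Finset.prod_mul_distrib]
  rw [Finset.prod_univ_sum, Fintype.piFinset_univ]

lemma delta_prod {N : ℕ} (s t : Fin N → Fin 2) :
    ∏ k, (if s k = t k then (1 : ℂ) else 0) = if s = t then 1 else 0 := by
  by_cases hst : s = t
  · subst hst; simp
  · rw [if_neg hst]
    obtain ⟨k, hk⟩ : ∃ k, s k ≠ t k := by
      by_contra hc; push_neg at hc; exact hst (funext hc)
    exact Finset.prod_eq_zero (Finset.mem_univ k) (if_neg hk)

lemma kron_one (N : ℕ) : kron N (fun _ => 1) = 1 := by
  ext s t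
  simp only [kron, Matrix.of_apply, Matrix.one_apply]
  exact delta_prod s t

lemma siteOp_eq_kron (N : ℕ) (k : Fin N) (m : Matrix (Fin 2) (Fin 2) ℂ) :
    siteOp N k m = kron N (fun j => if j = k then m else 1) := by
  ext s t
  simp only [siteOp, kron, Matrix.of_apply]
  rw [← Finset.mul_prod_erase univ _ (Finset.mem_univ k), if_pos rfl]
  congr 1
  apply Finset.prod_congr rfl
  intro j hj
  rw [if_neg (Finset.mem_erase.mp hj).1, Matrix.one_apply]

def Hmat (N : ℕ) : Matrix (Fin N → Fin 2) (Fin N → Fin 2) ℂ := kron N (fun _ => h)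

lemma sqrt2_inv_sq : ((Real.sqrt 2 : ℂ))⁻¹ * ((Real.sqrt 2 : ℂ))⁻¹ = 2⁻¹ := by
  rw [← mul_inv]
  norm_cast
  rw [Real.mul_self_sqrt (by norm_num)]
  norm_num

lemma h_mul_h : h * h = 1 := by
  rw [h, Matrix.smul_mul, Matrix.mul_smul, smul_smul, sqrt2_inv_sq]
  ext i j
  fin_cases i <;> fin_cases j <;>
    simp [Matrix.mul_apply, Fin.sum_univ_two, Matrix.one_apply] <;> norm_num

lemma H_mul_H (N : ℕ) : Hmat N * Hmat N = 1 := by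
  rw [Hmat, kron_mul]
  simp only [h_mul_h]
  exact kron_one N

lemma h_pauliX_h : h * pauliX * h = pauliZ := by
  rw [h, pauliX, pauliZ, Matrix.smul_mul, Matrix.smul_mul, Matrix.mul_smul, smul_smul,
    sqrt2_inv_sq]
  ext i j
  fin_cases i <;> fin_cases j <;>
    simp [Matrix.mul_apply, Fin.sum_univ_two] <;> norm_num

def sgn : Fin 2 → ℂ := fun j => if j = 0 then 1 else -1

def dvec (N : ℕ) : (Fin N → Fin 2) → ℂ := fun s => (2⁻¹ : ℂ) * ∑ k, sgn (s k)

lemma pauliZ_apply (i j : Fin 2) : pauliZ i j = if i = j then sgn i else 0 := by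
  fin_cases i <;> fin_cases j <;> simp [pauliZ, sgn]

lemma siteOp_pauliZ (N : ℕ) (k : Fin N) :
    siteOp N k pauliZ = Matrix.diagonal (fun s => sgn (s k)) := by
  ext s t
  simp only [siteOp, Matrix.of_apply, Matrix.diagonal_apply, pauliZ_apply]
  by_cases hst : s = t
  · subst hst; simp
  · rw [if_neg hst]
    by_cases hk : s k = t k
    · obtain ⟨j, hj⟩ : ∃ j, s j ≠ t j := by
        by_contra hc; push_neg at hc; exact hst (funext hc)
      have hjk : j ≠ k := fun e => hj (by rw [e]; exact hk)
      have hz : (∏ j ∈ Finset.univ.erase k, if s j = t j then (1 : ℂ) else 0) = 0 :=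
        Finset.prod_eq_zero (Finset.mem_erase.mpr ⟨hjk, Finset.mem_univ j⟩) (if_neg hj)
      rw [hz, mul_zero]
    · rw [if_neg hk, zero_mul]

lemma H_siteOp_H (N : ℕ) (k : Fin N) (m : Matrix (Fin 2) (Fin 2) ℂ) :
    Hmat N * siteOp N k m * Hmat N = siteOp N k (h * m * h) := by
  rw [siteOp_eq_kron, siteOp_eq_kron, Hmat, kron_mul, kron_mul]
  apply congrArg (kron N)
  funext j
  by_cases hj : j = k
  · simp [hj, Matrix.mul_assoc]
  · simp [hj, h_mul_h]

lemma Jx_eq (N : ℕ) : Jx N = Hmat N * Matrix.diagonal (dvec N) * Hmat N := by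
  have key : ∀ k, siteOp N k pauliX = Hmat N * siteOp N k pauliZ * Hmat N := by
    intro k
    have h1 := H_siteOp_H N k pauliX
    rw [h_pauliX_h] at h1
    rw [← h1]
    rw [← Matrix.mul_assoc, ← Matrix.mul_assoc]
    rw [Matrix.mul_assoc (Hmat N * Hmat N), Matrix.mul_assoc (Hmat N * Hmat N)]
    rw [H_mul_H, Matrix.one_mul, Matrix.mul_assoc, H_mul_H, Matrix.mul_one]
  have hs : ∑ k : Fin N, siteOp N k pauliZ
      = Matrix.diagonal (fun s => ∑ k, sgn (s k)) := by
    ext s t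
    simp only [Matrix.sum_apply, siteOp_pauliZ, Matrix.diagonal_apply]
    by_cases hst : s = t
    · subst hst; simp
    · simp [hst]
  have hd : Matrix.diagonal (dvec N)
      = (1/2 : ℂ) • Matrix.diagonal (fun s => ∑ k, sgn (s k)) := by
    ext s t
    by_cases hst : s = t
    · subst hst; simp [Matrix.diagonal_apply, dvec]
    · simp [Matrix.diagonal_apply, hst]
  rw [Jx, hd, Matrix.mul_smul, Matrix.smul_mul]
  congr 1
  simp_rw [key]
  rw [← Finset.sum_mul, ← Finset.mul_sum, hs]

def Hunit (N : ℕ) : (Matrix (Fin N → Fin 2) (Fin N → Fin 2) ℂ)ˣ :=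
  ⟨Hmat N, Hmat N, H_mul_H N, H_mul_H N⟩

lemma JxJx (N : ℕ) :
    Jx N * Jx N = Hmat N * Matrix.diagonal (fun s => dvec N s ^ 2) * Hmat N := by
  rw [Jx_eq]
  rw [show Hmat N * Matrix.diagonal (dvec N) * Hmat N *
      (Hmat N * Matrix.diagonal (dvec N) * Hmat N)
      = Hmat N * (Matrix.diagonal (dvec N) * (Hmat N * Hmat N) *
          Matrix.diagonal (dvec N)) * Hmat N by
    simp only [Matrix.mul_assoc]]
  rw [H_mul_H, Matrix.mul_one, Matrix.diagonal_mul_diagonal]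
  simp only [← sq]

lemma exp_eq (N : ℕ) (c : ℂ) :
    NormedSpace.exp (c • (Jx N * Jx N)) =
      Hmat N * Matrix.diagonal (fun s => Complex.exp (c * dvec N s ^ 2)) * Hmat N := by
  have hdd : Matrix.diagonal (fun s : Fin N → Fin 2 => c * dvec N s ^ 2)
      = c • Matrix.diagonal (fun s => dvec N s ^ 2) := by
    ext s t
    by_cases hst : s = t
    · subst hst; simp [Matrix.diagonal_apply]
    · simp [Matrix.diagonal_apply, hst]
  have h1 : c • (Jx N * Jx N)
      = Hmat N * Matrix.diagonal (fun s => c * dvec N s ^ 2) * Hmat N := by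
    rw [JxJx, hdd, Matrix.mul_smul, Matrix.smul_mul]
  rw [h1]
  have h2 := Matrix.exp_units_conj (Hunit N)
    (Matrix.diagonal fun s : Fin N → Fin 2 => c * dvec N s ^ 2)
  have e1 : ((Hunit N : (Matrix (Fin N → Fin 2) (Fin N → Fin 2) ℂ)ˣ) :
      Matrix (Fin N → Fin 2) (Fin N → Fin 2) ℂ) = Hmat N := rfl
  have e2 : (((Hunit N)⁻¹ : (Matrix (Fin N → Fin 2) (Fin N → Fin 2) ℂ)ˣ) :
      Matrix (Fin N → Fin 2) (Fin N → Fin 2) ℂ) = Hmat N := rfl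
  rw [e1, e2] at h2
  rw [h2, Matrix.exp_diagonal, Pi.exp_def, ← Complex.exp_eq_exp_ℂ]

def wv (N : ℕ) (θ : ℝ) : (Fin N → Fin 2) → ℂ :=
  fun x => Complex.exp ((-(θ / 2 : ℂ) * Complex.I) * dvec N x ^ 2) * Hmat N x (fun _ => 1)

lemma psi_eq (N : ℕ) (θ : ℝ) : oneAxisTwisted N θ = (Hmat N).mulVec (wv N θ) := by
  funext s
  unfold oneAxisTwisted
  rw [exp_eq]
  simp only [Matrix.mulVec, dotProduct, allDown, mul_ite, mul_one, mul_zero,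
    Finset.sum_ite_eq', Finset.mem_univ, if_true, wv]
  rw [Matrix.mul_apply]
  apply Finset.sum_congr rfl
  intro j _
  rw [Matrix.mul_diagonal]
  ring

lemma h_conj (i j : Fin 2) : (starRingEnd ℂ) (h i j) = h i j := by
  fin_cases i <;> fin_cases j <;> simp [h]

lemma Hmat_conj (N : ℕ) (s t : Fin N → Fin 2) :
    (starRingEnd ℂ) (Hmat N s t) = Hmat N s t := by
  simp only [Hmat, kron, Matrix.of_apply, map_prod, h_conj]

lemma h_symm (i j : Fin 2) : h i j = h j i := by
  fin_cases i <;> fin_cases j <;> simp [h]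

lemma Hmat_symm (N : ℕ) : (Hmat N)ᵀ = Hmat N := by
  ext s t
  simp only [Matrix.transpose_apply, Hmat, kron, Matrix.of_apply]
  exact Finset.prod_congr rfl fun k _ => h_symm (t k) (s k)

lemma expVal_eq (N : ℕ) (θ : ℝ) (O : Matrix (Fin N → Fin 2) (Fin N → Fin 2) ℂ) :
    expVal N θ O =
      ∑ x, ∑ y, (starRingEnd ℂ) (wv N θ x) * ((Hmat N * O * Hmat N) x y * wv N θ y) := by
  unfold expVal
  rw [psi_eq]
  have hstar : star ((Hmat N).mulVec (wv N θ)) = (Hmat N).mulVec (star (wv N θ)) := by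
    funext x
    simp only [Pi.star_apply, Matrix.mulVec, dotProduct, star_sum, star_mul']
    apply Finset.sum_congr rfl
    intro y _
    rw [Complex.star_def, Hmat_conj]
  rw [hstar, Matrix.mulVec_mulVec]
  rw [dotProduct_comm, Matrix.dotProduct_mulVec, dotProduct_comm]
  have hvm : Matrix.vecMul ((O * Hmat N).mulVec (wv N θ)) (Hmat N)
      = (Hmat N * O * Hmat N).mulVec (wv N θ) := by
    rw [← Matrix.mulVec_transpose, Hmat_symm, Matrix.mulVec_mulVec, ← Matrix.mul_assoc]
  rw [hvm]
  simp only [dotProduct, Matrix.mulVec, Pi.star_apply, Complex.star_def,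
    Finset.mul_sum]

def Amat : Matrix (Fin 2) (Fin 2) ℂ := (2⁻¹ : ℂ) • !![1, -1; 1, -1]
def Bmat : Matrix (Fin 2) (Fin 2) ℂ := (2⁻¹ : ℂ) • !![1, 1; -1, -1]

lemma h_pauliPlus_h : h * pauliPlus * h = Amat := by
  rw [h, pauliPlus, Amat, Matrix.smul_mul, Matrix.smul_mul, Matrix.mul_smul, smul_smul,
    sqrt2_inv_sq]
  ext i j
  fin_cases i <;> fin_cases j <;>
    simp [Matrix.mul_apply, Fin.sum_univ_two]
lemma h_pauliMinus_h : h * pauliMinus * h = Bmat := by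
  rw [h, pauliMinus, Bmat, Matrix.smul_mul, Matrix.smul_mul, Matrix.mul_smul, smul_smul,
    sqrt2_inv_sq]
  ext i j
  fin_cases i <;> fin_cases j <;>
    simp [Matrix.mul_apply, Fin.sum_univ_two]


lemma sgn_conj (j : Fin 2) : (starRingEnd ℂ) (sgn j) = sgn j := by
  fin_cases j <;> simp [sgn]

lemma h_one_mul (j j' : Fin 2) : h j 1 * h j' 1 = 2⁻¹ * (sgn j * sgn j') := by
  fin_cases j <;> fin_cases j' <;> simp [h, sgn] <;> linear_combination sqrt2_inv_sq

lemma h_sq (j : Fin 2) : h j 1 * h j 1 = 2⁻¹ := by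
  rw [h_one_mul]
  fin_cases j <;> simp [sgn]

lemma Amat_apply (i j : Fin 2) : Amat i j = 2⁻¹ * sgn j := by
  fin_cases i <;> fin_cases j <;> simp [Amat, sgn]

lemma Bmat_apply (i j : Fin 2) : Bmat i j = 2⁻¹ * sgn i := by
  fin_cases i <;> fin_cases j <;> simp [Bmat, sgn]

lemma scalar_combine (c sa sb sr K ha hb hr : ℂ) :
    Complex.exp (-(c * (2⁻¹ * (sa + sr)) ^ 2)) * (ha * hr) *
      (K * (Complex.exp (c * (2⁻¹ * (sb + sr)) ^ 2) * (hb * hr)))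
    = (Complex.exp (c * (sb ^ 2 - sa ^ 2) / 4) * (ha * hb) * K) *
        (Complex.exp (c * (sb - sa) / 2 * sr) * (hr * hr)) := by
  have h1 : -(c * (2⁻¹ * (sa + sr)) ^ 2) + c * (2⁻¹ * (sb + sr)) ^ 2
      = c * (sb ^ 2 - sa ^ 2) / 4 + c * (sb - sa) / 2 * sr := by ring
  calc Complex.exp (-(c * (2⁻¹ * (sa + sr)) ^ 2)) * (ha * hr) *
        (K * (Complex.exp (c * (2⁻¹ * (sb + sr)) ^ 2) * (hb * hr)))
      = Complex.exp (-(c * (2⁻¹ * (sa + sr)) ^ 2) + c * (2⁻¹ * (sb + sr)) ^ 2) *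
          ((ha * hb) * K * (hr * hr)) := by
        rw [Complex.exp_add]; ring
    _ = _ := by rw [h1, Complex.exp_add]; ring

section Split

variable (N M : ℕ) (hNM : N = M + 2)

def emb2 (i : Fin 2) : Fin N := ⟨i, by omega⟩
def embM (i : Fin M) : Fin N := ⟨(i : ℕ) + 2, by omega⟩

def sumEquiv : Fin 2 ⊕ Fin M ≃ Fin N where
  toFun := Sum.elim (emb2 N M hNM) (embM N M hNM)
  invFun k := if h : (k : ℕ) < 2 then .inl ⟨k, h⟩ else .inr ⟨(k : ℕ) - 2, by omega⟩
  left_inv := by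
    rintro (i | i)
    · dsimp only [Sum.elim_inl, emb2]
      rw [dif_pos i.isLt]
    · dsimp only [Sum.elim_inr, embM]
      rw [dif_neg (by omega)]
      simp
  right_inv := by
    intro k
    by_cases hk : (k : ℕ) < 2
    · dsimp only
      rw [dif_pos hk]
      exact Fin.ext rfl
    · dsimp only
      rw [dif_neg hk]
      exact Fin.ext (by show (k : ℕ) - 2 + 2 = (k : ℕ); omega)

lemma prod_split {β : Type*} [CommMonoid β] (F : Fin N → β) :
    ∏ k, F k = (∏ i : Fin 2, F (emb2 N M hNM i)) * ∏ i : Fin M, F (embM N M hNM i) := by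
  rw [← Equiv.prod_comp (sumEquiv N M hNM) F, Fintype.prod_sum_type]
  rfl

lemma sum_split (F : Fin N → ℂ) :
    ∑ k, F k = (∑ i : Fin 2, F (emb2 N M hNM i)) + ∑ i : Fin M, F (embM N M hNM i) := by
  rw [← Equiv.sum_comp (sumEquiv N M hNM) F, Fintype.sum_sum_type]
  rfl

def inj (a : Fin 2 → Fin 2) (r : Fin M → Fin 2) : Fin N → Fin 2 :=
  fun k => if h : (k : ℕ) < 2 then a ⟨k, h⟩ else r ⟨(k : ℕ) - 2, by omega⟩

lemma inj_emb2 (a : Fin 2 → Fin 2) (r : Fin M → Fin 2) (i : Fin 2) :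
    inj N M hNM a r (emb2 N M hNM i) = a i := by
  simp only [inj, emb2]
  exact dif_pos i.isLt

lemma inj_embM (a : Fin 2 → Fin 2) (r : Fin M → Fin 2) (i : Fin M) :
    inj N M hNM a r (embM N M hNM i) = r i := by
  simp only [inj, embM]
  simp

def funEquiv : (Fin 2 → Fin 2) × (Fin M → Fin 2) ≃ (Fin N → Fin 2) where
  toFun p := inj N M hNM p.1 p.2
  invFun x := (fun i => x (emb2 N M hNM i), fun i => x (embM N M hNM i))
  left_inv := by
    rintro ⟨a, r⟩
    exact Prod.ext (funext fun i => inj_emb2 N M hNM a r i)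
      (funext fun i => inj_embM N M hNM a r i)
  right_inv := by
    intro x
    funext k
    dsimp only [inj]
    by_cases hk : (k : ℕ) < 2
    · rw [dif_pos hk]
      congr 1
    · rw [dif_neg hk]
      congr 1
      exact Fin.ext (by show (k : ℕ) - 2 + 2 = (k : ℕ); omega)

lemma sumFun_split (f : (Fin N → Fin 2) → ℂ) :
    ∑ x, f x = ∑ a : Fin 2 → Fin 2, ∑ r : Fin M → Fin 2, f (inj N M hNM a r) := by
  rw [← Equiv.sum_comp (funEquiv N M hNM) f, Fintype.sum_prod_type]
  rfl


def gfun : Fin N → Matrix (Fin 2) (Fin 2) ℂ := fun j =>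
  if j = emb2 N M hNM 0 then Amat else if j = emb2 N M hNM 1 then Bmat else 1

lemma emb2_ne : emb2 N M hNM 0 ≠ emb2 N M hNM 1 := by
  intro hcontra
  have := congrArg Fin.val hcontra
  simp [emb2] at this

lemma HOH :
    Hmat N * (siteOp N (emb2 N M hNM 0) pauliPlus * siteOp N (emb2 N M hNM 1) pauliMinus) *
      Hmat N = kron N (gfun N M hNM) := by
  have key : ∀ S1 S2 : Matrix (Fin N → Fin 2) (Fin N → Fin 2) ℂ,
      Hmat N * (S1 * S2) * Hmat N =
        (Hmat N * S1 * Hmat N) * (Hmat N * S2 * Hmat N) := by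
    intro S1 S2
    calc Hmat N * (S1 * S2) * Hmat N
        = Hmat N * (S1 * (Hmat N * Hmat N) * S2) * Hmat N := by
          rw [H_mul_H, Matrix.mul_one]
      _ = (Hmat N * S1 * Hmat N) * (Hmat N * S2 * Hmat N) := by
          simp only [Matrix.mul_assoc]
  rw [key, H_siteOp_H, H_siteOp_H, h_pauliPlus_h, h_pauliMinus_h,
    siteOp_eq_kron, siteOp_eq_kron, kron_mul]
  apply congrArg (kron N)
  funext j
  by_cases hj0 : j = emb2 N M hNM 0
  · simp [gfun, hj0, emb2_ne N M hNM]
  · by_cases hj1 : j = emb2 N M hNM 1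
    · simp [gfun, hj0, hj1, Ne.symm (emb2_ne N M hNM)]
    · simp [gfun, hj0, hj1]

lemma kron_gfun (a b : Fin 2 → Fin 2) (r r' : Fin M → Fin 2) :
    kron N (gfun N M hNM) (inj N M hNM a r) (inj N M hNM b r') =
      Amat (a 0) (b 0) * Bmat (a 1) (b 1) * (if r = r' then 1 else 0) := by
  have hg0 : gfun N M hNM (emb2 N M hNM 0) = Amat := by simp [gfun]
  have hg1 : gfun N M hNM (emb2 N M hNM 1) = Bmat := by
    simp [gfun, (emb2_ne N M hNM).symm]
  have hgM : ∀ i : Fin M, gfun N M hNM (embM N M hNM i) = 1 := by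
    intro i
    have h0 : embM N M hNM i ≠ emb2 N M hNM 0 := by
      intro hcontra; have := congrArg Fin.val hcontra; simp [emb2, embM] at this
    have h1 : embM N M hNM i ≠ emb2 N M hNM 1 := by
      intro hcontra; have := congrArg Fin.val hcontra; simp [emb2, embM] at this
    simp [gfun, h0, h1]
  simp only [kron, Matrix.of_apply]
  rw [prod_split N M hNM, Fin.prod_univ_two]
  simp only [inj_emb2, inj_embM, hg0, hg1, hgM, Matrix.one_apply]
  rw [delta_prod]

lemma dvec_inj (a : Fin 2 → Fin 2) (r : Fin M → Fin 2) :
    dvec N (inj N M hNM a r) =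
      2⁻¹ * ((sgn (a 0) + sgn (a 1)) + ∑ i, sgn (r i)) := by
  unfold dvec
  rw [sum_split N M hNM, Fin.sum_univ_two]
  simp only [inj_emb2, inj_embM]

lemma Hones (a : Fin 2 → Fin 2) (r : Fin M → Fin 2) :
    Hmat N (inj N M hNM a r) (fun _ => 1) =
      (h (a 0) 1 * h (a 1) 1) * ∏ i, h (r i) 1 := by
  simp only [Hmat, kron, Matrix.of_apply]
  rw [prod_split N M hNM, Fin.prod_univ_two]
  simp only [inj_emb2, inj_embM]

lemma stepA (θ : ℝ) :
    (∑ x, ∑ y, (starRingEnd ℂ) (wv N θ x) * (kron N (gfun N M hNM) x y * wv N θ y))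
    = ∑ a : Fin 2 → Fin 2, ∑ b : Fin 2 → Fin 2, ∑ r : Fin M → Fin 2,
        (starRingEnd ℂ) (wv N θ (inj N M hNM a r)) *
          (Amat (a 0) (b 0) * Bmat (a 1) (b 1) * wv N θ (inj N M hNM b r)) := by
  rw [sumFun_split N M hNM]
  apply Finset.sum_congr rfl
  intro a _
  have inner : ∀ r : Fin M → Fin 2,
      (∑ y, (starRingEnd ℂ) (wv N θ (inj N M hNM a r)) *
        (kron N (gfun N M hNM) (inj N M hNM a r) y * wv N θ y))
      = ∑ b : Fin 2 → Fin 2,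
          (starRingEnd ℂ) (wv N θ (inj N M hNM a r)) *
            (Amat (a 0) (b 0) * Bmat (a 1) (b 1) * wv N θ (inj N M hNM b r)) := by
    intro r
    rw [sumFun_split N M hNM]
    apply Finset.sum_congr rfl
    intro b _
    simp only [kron_gfun N M hNM, mul_ite, mul_one, mul_zero, ite_mul, zero_mul]
    rw [Finset.sum_ite_eq]
    simp
  rw [Finset.sum_congr rfl (fun r _ => inner r)]
  exact Finset.sum_comm

lemma stepB (θ : ℝ) (a b : Fin 2 → Fin 2) :
    (∑ r : Fin M → Fin 2,
      (starRingEnd ℂ) (wv N θ (inj N M hNM a r)) *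
        (Amat (a 0) (b 0) * Bmat (a 1) (b 1) * wv N θ (inj N M hNM b r)))
    = Complex.exp ((-(θ / 2 : ℂ) * Complex.I) *
          ((sgn (b 0) + sgn (b 1)) ^ 2 - (sgn (a 0) + sgn (a 1)) ^ 2) / 4) *
        ((2⁻¹ * (sgn (a 0) * sgn (a 1))) * (2⁻¹ * (sgn (b 0) * sgn (b 1)))) *
        (Amat (a 0) (b 0) * Bmat (a 1) (b 1)) *
        ((Complex.exp ((-(θ / 2 : ℂ) * Complex.I) *
              ((sgn (b 0) + sgn (b 1)) - (sgn (a 0) + sgn (a 1))) / 2) +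
          Complex.exp (-((-(θ / 2 : ℂ) * Complex.I) *
              ((sgn (b 0) + sgn (b 1)) - (sgn (a 0) + sgn (a 1))) / 2))) / 2) ^ M := by
  have hcc : (starRingEnd ℂ) (-(θ / 2 : ℂ) * Complex.I) = -(-(θ / 2 : ℂ) * Complex.I) := by
    simp [map_div₀, Complex.conj_ofReal, Complex.conj_I, map_ofNat]
  have hterm : ∀ r : Fin M → Fin 2,
      (starRingEnd ℂ) (wv N θ (inj N M hNM a r)) *
        (Amat (a 0) (b 0) * Bmat (a 1) (b 1) * wv N θ (inj N M hNM b r))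
      = (Complex.exp ((-(θ / 2 : ℂ) * Complex.I) *
            ((sgn (b 0) + sgn (b 1)) ^ 2 - (sgn (a 0) + sgn (a 1)) ^ 2) / 4) *
          ((h (a 0) 1 * h (a 1) 1) * (h (b 0) 1 * h (b 1) 1)) *
          (Amat (a 0) (b 0) * Bmat (a 1) (b 1))) *
        (Complex.exp ((-(θ / 2 : ℂ) * Complex.I) *
            ((sgn (b 0) + sgn (b 1)) - (sgn (a 0) + sgn (a 1))) / 2 * ∑ i, sgn (r i)) *
          ((∏ i, h (r i) 1) * ∏ i, h (r i) 1)) := by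
    intro r
    rw [wv, wv, dvec_inj, dvec_inj, Hones, Hones]
    rw [_root_.map_mul]
    rw [← Complex.exp_conj]
    have hconjarg : (starRingEnd ℂ)
        ((-(θ / 2 : ℂ) * Complex.I) *
          (2⁻¹ * ((sgn (a 0) + sgn (a 1)) + ∑ i, sgn (r i))) ^ 2)
        = -((-(θ / 2 : ℂ) * Complex.I) *
            (2⁻¹ * ((sgn (a 0) + sgn (a 1)) + ∑ i, sgn (r i))) ^ 2) := by
      rw [_root_.map_mul, hcc, map_pow, _root_.map_mul, map_add, map_add, map_sum]
      simp only [sgn_conj, map_inv₀, map_ofNat, neg_mul]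
    rw [hconjarg]
    have hconjH : (starRingEnd ℂ)
        ((h (a 0) 1 * h (a 1) 1) * ∏ i, h (r i) 1)
        = (h (a 0) 1 * h (a 1) 1) * ∏ i, h (r i) 1 := by
      rw [_root_.map_mul, _root_.map_mul, map_prod]
      simp only [h_conj]
    rw [hconjH]
    exact scalar_combine _ _ _ _ _ _ _ _
  rw [Finset.sum_congr rfl (fun r _ => hterm r), ← Finset.mul_sum]
  have hpre : Complex.exp ((-(θ / 2 : ℂ) * Complex.I) *
        ((sgn (b 0) + sgn (b 1)) ^ 2 - (sgn (a 0) + sgn (a 1)) ^ 2) / 4) *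
      ((h (a 0) 1 * h (a 1) 1) * (h (b 0) 1 * h (b 1) 1)) *
      (Amat (a 0) (b 0) * Bmat (a 1) (b 1))
      = Complex.exp ((-(θ / 2 : ℂ) * Complex.I) *
        ((sgn (b 0) + sgn (b 1)) ^ 2 - (sgn (a 0) + sgn (a 1)) ^ 2) / 4) *
      ((2⁻¹ * (sgn (a 0) * sgn (a 1))) * (2⁻¹ * (sgn (b 0) * sgn (b 1)))) *
      (Amat (a 0) (b 0) * Bmat (a 1) (b 1)) := by
    rw [h_one_mul, h_one_mul]
  rw [hpre]
  congr 1
  have hfact : ∀ r : Fin M → Fin 2,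
      Complex.exp ((-(θ / 2 : ℂ) * Complex.I) *
          ((sgn (b 0) + sgn (b 1)) - (sgn (a 0) + sgn (a 1))) / 2 * ∑ i, sgn (r i)) *
        ((∏ i, h (r i) 1) * ∏ i, h (r i) 1)
      = ∏ i, (Complex.exp ((-(θ / 2 : ℂ) * Complex.I) *
          ((sgn (b 0) + sgn (b 1)) - (sgn (a 0) + sgn (a 1))) / 2 * sgn (r i)) *
            (h (r i) 1 * h (r i) 1)) := by
    intro r
    rw [Finset.mul_sum, Complex.exp_sum]
    rw [Finset.prod_mul_distrib, Finset.prod_mul_distrib]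
  rw [Finset.sum_congr rfl (fun r _ => hfact r)]
  have hps := Finset.prod_univ_sum (fun _ : Fin M => (Finset.univ : Finset (Fin 2)))
    (fun (_ : Fin M) (j : Fin 2) => Complex.exp ((-(θ / 2 : ℂ) * Complex.I) *
      ((sgn (b 0) + sgn (b 1)) - (sgn (a 0) + sgn (a 1))) / 2 * sgn j) * (h j 1 * h j 1))
  rw [Fintype.piFinset_univ] at hps
  rw [← hps, Finset.prod_const, Finset.card_univ, Fintype.card_fin]
  congr 1
  rw [Fin.sum_univ_two, h_sq, h_sq]
  have hs0 : sgn 0 = 1 := by simp [sgn]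
  have hs1 : sgn 1 = -1 := by simp [sgn]
  rw [hs0, hs1, mul_one, mul_neg_one]
  ring

lemma stepC (θ : ℝ) :
    (∑ a : Fin 2 → Fin 2, ∑ b : Fin 2 → Fin 2,
      Complex.exp ((-(θ / 2 : ℂ) * Complex.I) *
          ((sgn (b 0) + sgn (b 1)) ^ 2 - (sgn (a 0) + sgn (a 1)) ^ 2) / 4) *
        ((2⁻¹ * (sgn (a 0) * sgn (a 1))) * (2⁻¹ * (sgn (b 0) * sgn (b 1)))) *
        (Amat (a 0) (b 0) * Bmat (a 1) (b 1)) *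
        ((Complex.exp ((-(θ / 2 : ℂ) * Complex.I) *
              ((sgn (b 0) + sgn (b 1)) - (sgn (a 0) + sgn (a 1))) / 2) +
          Complex.exp (-((-(θ / 2 : ℂ) * Complex.I) *
              ((sgn (b 0) + sgn (b 1)) - (sgn (a 0) + sgn (a 1))) / 2))) / 2) ^ M)
    = (1 - ((Real.cos θ : ℂ)) ^ M) / 8 := by
  have enum : ∀ f : (Fin 2 → Fin 2) → ℂ,
      ∑ a : Fin 2 → Fin 2, f a = f ![0, 0] + f ![0, 1] + f ![1, 0] + f ![1, 1] := by
    intro f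
    rw [← Equiv.sum_comp (finTwoArrowEquiv (Fin 2)).symm f, Fintype.sum_prod_type]
    rw [Fin.sum_univ_two, Fin.sum_univ_two, Fin.sum_univ_two]
    simp only [finTwoArrowEquiv_symm_apply]
    ring
  rw [enum]
  rw [enum, enum, enum, enum]
  have hcos : ((Real.cos θ : ℝ) : ℂ)
      = (Complex.exp (↑θ * Complex.I) + Complex.exp (-(↑θ * Complex.I))) / 2 := by
    rw [Complex.ofReal_cos]
    have h2 := Complex.two_cos (θ : ℂ)
    rw [neg_mul] at h2
    linear_combination h2 / 2
  rw [hcos]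
  simp only [Matrix.cons_val_zero, Matrix.cons_val_one, Matrix.head_cons]
  have hs0 : sgn 0 = 1 := by simp [sgn]
  have hs1 : sgn 1 = -1 := by simp [sgn]
  have hA00 : Amat 0 0 = 2⁻¹ := by rw [Amat_apply, hs0, mul_one]
  have hA01 : Amat 0 1 = -2⁻¹ := by rw [Amat_apply, hs1]; ring
  have hA10 : Amat 1 0 = 2⁻¹ := by rw [Amat_apply, hs0, mul_one]
  have hA11 : Amat 1 1 = -2⁻¹ := by rw [Amat_apply, hs1]; ring
  have hB00 : Bmat 0 0 = 2⁻¹ := by rw [Bmat_apply, hs0, mul_one]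
  have hB01 : Bmat 0 1 = 2⁻¹ := by rw [Bmat_apply, hs0, mul_one]
  have hB10 : Bmat 1 0 = -2⁻¹ := by rw [Bmat_apply, hs1]; ring
  have hB11 : Bmat 1 1 = -2⁻¹ := by rw [Bmat_apply, hs1]; ring
  rw [hs0, hs1, hA00, hA01, hA10, hA11, hB00, hB01, hB10, hB11]
  norm_num
  ring_nf

end Split

end OAT

/-- For the one-axis twisted state on `N ≥ 2` qubits,
`⟨σ_{1+} σ_{2-}⟩ = (1 - cos^{N-2} θ)/8`. -/
theorem oneAxisTwisted_sigma_pm (N : ℕ) (hN : 2 ≤ N) (θ : ℝ) :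
    expVal N θ (siteOp N ⟨0, by omega⟩ pauliPlus * siteOp N ⟨1, by omega⟩ pauliMinus) =
      (1 - ((Real.cos θ : ℂ)) ^ (N - 2)) / 8 := by
  obtain ⟨M, hNM⟩ : ∃ M, N = M + 2 := ⟨N - 2, by omega⟩
  have h0 : (⟨0, by omega⟩ : Fin N) = OAT.emb2 N M hNM 0 := by
    apply Fin.ext; simp [OAT.emb2]
  have h1 : (⟨1, by omega⟩ : Fin N) = OAT.emb2 N M hNM 1 := by
    apply Fin.ext; simp [OAT.emb2]
  rw [OAT.expVal_eq, h0, h1, OAT.HOH N M hNM, OAT.stepA N M hNM θ]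
  rw [Finset.sum_congr rfl
    (fun a _ => Finset.sum_congr rfl (fun b _ => OAT.stepB N M hNM θ a b))]
  rw [OAT.stepC M θ]
  rw [show N - 2 = M by omega]

end OneAxisTwisting
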